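/- Consider a 2×2 biperiodic circle pattern with vertices A, B, C, D, E, F, G, H, I (faces ABED, DEHG, BCFE, EFIH cyclic, with monodromies u = C − A = F − D = I − G and v = G − A = H − B = I − C). If ∠CBA ≡ 0 (mod π), i.e. B lies on line (AC), then all four faces are cyclic trapezoids and the fundamental domain ACIG is a rectangle, i.e. (A − C) ⟂ (A − G). -/

import Mathlib

open EuclideanGeometry

/-- A nondegenerate cyclic quadrilateral: four pairwise distinct concyclic points. -/
def NondegCyclicQuad {V P : Type*} [NormedAddCommGroup V] [InnerProductSpace ℝ V]
    [MetricSpace P] [NormedAddTorsor V P] (p q r s : P) : Prop :=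
  p ≠ q ∧ p ≠ r ∧ p ≠ s ∧ q ≠ r ∧ q ≠ s ∧ r ≠ s ∧
    EuclideanGeometry.Concyclic ({p, q, r, s} : Set P)

private lemma coll_aux {V : Type*} [NormedAddCommGroup V] [InnerProductSpace ℝ V]
    (u : V) {x y : V} (hx : ∃ a : ℝ, x = a • u) (hy : ∃ b : ℝ, y = b • u) :
    Collinear ℝ ({0, x, y} : Set V) := by
  rw [collinear_iff_of_mem (Set.mem_insert 0 _)]
  refine ⟨u, ?_⟩
  rintro p (rfl | rfl | rfl)
  · exact ⟨0, by simp⟩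
  · obtain ⟨a, rfl⟩ := hx; exact ⟨a, by simp⟩
  · obtain ⟨b, rfl⟩ := hy; exact ⟨b, by simp⟩

section Aux

variable {V P : Type*} [NormedAddCommGroup V] [InnerProductSpace ℝ V]
    [MetricSpace P] [NormedAddTorsor V P] [Fact (Module.finrank ℝ V = 2)]
    [Module.Oriented ℝ V (Fin 2)]

/-- From flatness of the angle at `B`, `B - A` is a nonzero multiple (≠ 1) of `u`. -/
private lemma step1 (A B C : P) (u : V) (hu : u ≠ 0) (hAB : A ≠ B) (hBC : B ≠ C)
    (hC : C = u +ᵥ A)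
    (hflat : (2 : ℤ) • EuclideanGeometry.oangle C B A = 0) :
    ∃ t : ℝ, B -ᵥ A = t • u ∧ t ≠ 0 ∧ t ≠ 1 := by
  rw [Real.Angle.two_zsmul_eq_zero_iff] at hflat
  simp only [EuclideanGeometry.oangle] at hflat
  have h := (Module.Oriented.positiveOrientation (R := ℝ) (M := V)
    (ι := Fin 2)).oangle_eq_zero_or_eq_pi_iff_right_eq_smul.mp hflat
  rcases h with h0 | ⟨r, hr⟩
  · exact absurd (vsub_eq_zero_iff_eq.mp h0) (by simpa using hBC.symm)
  · have hCB : C -ᵥ B = u - (B -ᵥ A) := by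
      subst hC; rw [vadd_vsub_assoc, ← neg_vsub_eq_vsub_rev B A, sub_eq_add_neg]
    have hr0 : r ≠ 0 := by
      rintro rfl
      simp only [zero_smul] at hr
      exact hAB (vsub_eq_zero_iff_eq.mp hr)
    have hr1 : r ≠ 1 := by
      rintro rfl
      rw [one_smul] at hr
      have hAC : A = C := vsub_left_cancel hr
      apply hu
      have : u = C -ᵥ A := (vadd_vsub u A ▸ hC ▸ rfl)
      rw [this, ← hAC, vsub_self]
    have hsub : r - 1 ≠ 0 := sub_ne_zero.mpr hr1
    have key : (r - 1) • (B -ᵥ A) = r • u := by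
      have h1 : -(B -ᵥ A) = r • u - r • (B -ᵥ A) := by
        rw [← smul_sub, ← hCB, ← hr, neg_vsub_eq_vsub_rev]
      have := congrArg (· + r • (B -ᵥ A)) h1
      simp only [sub_add_cancel] at this
      rw [sub_smul, one_smul, sub_eq_add_neg, add_comm]
      exact this
    refine ⟨(r - 1)⁻¹ * r, ?_, mul_ne_zero (inv_ne_zero hsub) hr0, ?_⟩
    · rw [mul_smul, ← key, smul_smul, inv_mul_cancel₀ hsub, one_smul]
    · intro h1
      field_simp at h1
      exact hr1 (by linarith)

/-- The directed-angle chase: two adjacent cyclic faces with a chord parallel to `u`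
force the shared edge `DE` to be parallel to `u` as well. -/
private lemma step2 (A B C D E F : P) (u : V) (hu : u ≠ 0) (t : ℝ)
    (ht0 : t ≠ 0) (ht1 : t ≠ 1) (hBA : B -ᵥ A = t • u)
    (hC : C = u +ᵥ A) (hF : F = u +ᵥ D)
    (h1 : Cospherical ({A, B, E, D} : Set P))
    (h3 : Cospherical ({B, C, F, E} : Set P))
    (hAB : A ≠ B) (hAD : A ≠ D) (hBE : B ≠ E) (hDE : D ≠ E) (hEF : E ≠ F) :
    ∃ s : ℝ, E -ᵥ D = s • u ∧ s ≠ 0 := by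
  set o' := (Module.Oriented.positiveOrientation (R := ℝ) (M := V) (ι := Fin 2)) with ho'
  -- nonzero vectors
  have hED : E -ᵥ D ≠ 0 := vsub_ne_zero.mpr hDE.symm
  have hADv : A -ᵥ D ≠ 0 := vsub_ne_zero.mpr hAD
  have hEB : E -ᵥ B ≠ 0 := vsub_ne_zero.mpr hBE.symm
  have hEFv : E -ᵥ F ≠ 0 := vsub_ne_zero.mpr hEF
  -- distinctness consequences
  have hCB : C ≠ B := by
    intro h
    apply ht1
    have h2 : t • u = (1 : ℝ) • u := by
      rw [one_smul, ← hBA, ← h, hC, vadd_vsub]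
    exact smul_left_injective ℝ hu h2
  have hCF : C ≠ F := by
    intro h
    apply hAD
    have : A -ᵥ D = (0 : V) := by
      rw [← vadd_vsub_vadd_cancel_left u A D, ← hC, ← hF, h, vsub_self]
    exact vsub_eq_zero_iff_eq.mp this
  -- inscribed angle theorem on circle ABED: 2∡EDA = 2∡EBA
  have hset1 : ({E, D, B, A} : Set P) = {A, B, E, D} := by
    ext x; simp only [Set.mem_insert_iff, Set.mem_singleton_iff]; tauto
  have k1 : (2 : ℤ) • ∡ E D A = (2 : ℤ) • ∡ E B A :=
    (hset1 ▸ h1 : Cospherical ({E, D, B, A} : Set P)).two_zsmul_oangle_eq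
      hDE hAD.symm hBE hAB.symm
  -- inscribed angle theorem on circle BCFE: 2∡BEF = 2∡BCF
  have hset3 : ({B, E, C, F} : Set P) = {B, C, F, E} := by
    ext x; simp only [Set.mem_insert_iff, Set.mem_singleton_iff]; tauto
  have k2 : (2 : ℤ) • ∡ B E F = (2 : ℤ) • ∡ B C F :=
    (hset3 ▸ h3 : Cospherical ({B, E, C, F} : Set P)).two_zsmul_oangle_eq
      hBE.symm hEF hCB hCF
  -- rewrite k1 in vector form
  have t1 : (2 : ℤ) • o'.oangle (E -ᵥ D) (A -ᵥ D) = (2 : ℤ) • o'.oangle (E -ᵥ B) u := by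
    have hABv : A -ᵥ B = (-t) • u := by
      rw [neg_smul, ← hBA, neg_vsub_eq_vsub_rev]
    have := k1
    simp only [EuclideanGeometry.oangle] at this
    rw [this, hABv, o'.two_zsmul_oangle_smul_right_of_ne_zero _ _ (neg_ne_zero.mpr ht0)]
  -- rewrite k2 in vector form
  have t3 : (2 : ℤ) • o'.oangle (E -ᵥ B) (E -ᵥ F) = (2 : ℤ) • o'.oangle u (A -ᵥ D) := by
    have hBCv : B -ᵥ C = (t - 1) • u := by
      rw [hC, vsub_vadd_eq_vsub_sub, hBA, sub_smul, one_smul]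
    have hFCv : F -ᵥ C = (-1 : ℝ) • (A -ᵥ D) := by
      rw [hC, hF, vadd_vsub_vadd_cancel_left, neg_one_smul, neg_vsub_eq_vsub_rev]
    have := k2
    simp only [EuclideanGeometry.oangle] at this
    rw [← neg_vsub_eq_vsub_rev E B, ← neg_vsub_eq_vsub_rev E F,
      o'.two_zsmul_oangle_neg_left, o'.two_zsmul_oangle_neg_right] at this
    rw [this, hBCv, hFCv,
      o'.two_zsmul_oangle_smul_left_of_ne_zero _ _ (sub_ne_zero.mpr ht1),
      o'.two_zsmul_oangle_smul_right_of_ne_zero _ _ (by norm_num : (-1 : ℝ) ≠ 0)]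
  -- sum of three angles is zero
  have hsum : o'.oangle (E -ᵥ B) u + o'.oangle (A -ᵥ D) (E -ᵥ B) + o'.oangle u (A -ᵥ D) = 0 := by
    have h' : o'.oangle u (A -ᵥ D) + o'.oangle (A -ᵥ D) (E -ᵥ B) = o'.oangle u (E -ᵥ B) :=
      o'.oangle_add hu hADv hEB
    calc o'.oangle (E -ᵥ B) u + o'.oangle (A -ᵥ D) (E -ᵥ B) + o'.oangle u (A -ᵥ D)
        = o'.oangle u (A -ᵥ D) + o'.oangle (A -ᵥ D) (E -ᵥ B) + o'.oangle (E -ᵥ B) u := by abel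
      _ = o'.oangle u (E -ᵥ B) + o'.oangle (E -ᵥ B) u := by rw [h']
      _ = 0 := o'.oangle_add_oangle_rev _ _
  -- the key conclusion: D, E, F collinear
  have hX : (2 : ℤ) • o'.oangle (E -ᵥ D) (E -ᵥ F) = 0 := by
    have hadd : o'.oangle (E -ᵥ D) (A -ᵥ D) + o'.oangle (A -ᵥ D) (E -ᵥ B)
        + o'.oangle (E -ᵥ B) (E -ᵥ F) = o'.oangle (E -ᵥ D) (E -ᵥ F) := by
      rw [o'.oangle_add hED hADv hEB, o'.oangle_add hED hEB hEFv]
    calc (2 : ℤ) • o'.oangle (E -ᵥ D) (E -ᵥ F)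
        = (2 : ℤ) • o'.oangle (E -ᵥ D) (A -ᵥ D) + (2 : ℤ) • o'.oangle (A -ᵥ D) (E -ᵥ B)
          + (2 : ℤ) • o'.oangle (E -ᵥ B) (E -ᵥ F) := by
          rw [← smul_add, ← smul_add, hadd]
      _ = (2 : ℤ) • o'.oangle (E -ᵥ B) u + (2 : ℤ) • o'.oangle (A -ᵥ D) (E -ᵥ B)
          + (2 : ℤ) • o'.oangle u (A -ᵥ D) := by rw [t1, t3]
      _ = (2 : ℤ) • (o'.oangle (E -ᵥ B) u + o'.oangle (A -ᵥ D) (E -ᵥ B)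
          + o'.oangle u (A -ᵥ D)) := by rw [smul_add, smul_add]
      _ = 0 := by rw [hsum, smul_zero]
  -- extract the parallelism
  rw [Real.Angle.two_zsmul_eq_zero_iff] at hX
  have h := o'.oangle_eq_zero_or_eq_pi_iff_right_eq_smul.mp hX
  rcases h with h0 | ⟨r, hr⟩
  · exact absurd h0 hED
  · have hFD : F -ᵥ D = u := by rw [hF, vadd_vsub]
    have key : (1 - r) • (E -ᵥ D) = u := by
      rw [← hFD, sub_smul, one_smul, ← hr, vsub_sub_vsub_cancel_left]
    have hr1 : (1 : ℝ) - r ≠ 0 := by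
      intro h0
      rw [h0, zero_smul] at key
      exact hu key.symm
    exact ⟨(1 - r)⁻¹, by rw [← key, smul_smul, inv_mul_cancel₀ hr1, one_smul],
      inv_ne_zero hr1⟩

end Aux

theorem stmt9 {V P : Type*} [NormedAddCommGroup V] [InnerProductSpace ℝ V]
    [MetricSpace P] [NormedAddTorsor V P] [Fact (Module.finrank ℝ V = 2)]
    [Module.Oriented ℝ V (Fin 2)]
    (A B C D E F G H I : P) (u v : V) (hu : u ≠ 0) (hv : v ≠ 0)
    (f1 : NondegCyclicQuad A B E D) (f2 : NondegCyclicQuad D E H G)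
    (f3 : NondegCyclicQuad B C F E) (f4 : NondegCyclicQuad E F I H)
    (hC : C = u +ᵥ A) (hF : F = u +ᵥ D) (hI : I = u +ᵥ G)
    (hG : G = v +ᵥ A) (hH : H = v +ᵥ B) (hI' : I = v +ᵥ C)
    (hflat : (2 : ℤ) • EuclideanGeometry.oangle C B A = 0) :
    Collinear ℝ ({0, B -ᵥ A, E -ᵥ D} : Set V) ∧
    Collinear ℝ ({0, E -ᵥ D, H -ᵥ G} : Set V) ∧
    Collinear ℝ ({0, C -ᵥ B, F -ᵥ E} : Set V) ∧
    Collinear ℝ ({0, F -ᵥ E, I -ᵥ H} : Set V) ∧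
    (inner ℝ (A -ᵥ C) (A -ᵥ G) : ℝ) = 0 := by
  obtain ⟨hAB, hAE, hAD, hBE, hBD, hED, hc1⟩ := f1
  obtain ⟨hDE2, hDH, hDG, hEH, hEG, hHG2, hc2⟩ := f2
  obtain ⟨hBC, hBF, hBE3, hCF, hCE, hFE, hc3⟩ := f3
  -- B - A = t • u
  obtain ⟨t, hBA, ht0, ht1⟩ := step1 A B C u hu hAB hBC hC hflat
  -- E - D = s • u
  obtain ⟨s, hEDv, hs0⟩ := step2 A B C D E F u hu t ht0 ht1 hBA hC hF
    hc1.1 hc3.1 hAB hAD hBE hED.symm hFE.symm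
  -- translation identities
  have hHGv : H -ᵥ G = B -ᵥ A := by rw [hH, hG, vadd_vsub_vadd_cancel_left]
  have hIHv : I -ᵥ H = C -ᵥ B := by rw [hI', hH, vadd_vsub_vadd_cancel_left]
  have hCBv : C -ᵥ B = (1 - t) • u := by
    rw [hC, vadd_vsub_assoc, ← neg_vsub_eq_vsub_rev B A, hBA, sub_smul, one_smul,
      sub_eq_add_neg]
  have hFEv : F -ᵥ E = (1 - s) • u := by
    rw [hF, vadd_vsub_assoc, ← neg_vsub_eq_vsub_rev E D, hEDv, sub_smul, one_smul,
      sub_eq_add_neg]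
  refine ⟨coll_aux u ⟨t, hBA⟩ ⟨s, hEDv⟩,
    coll_aux u ⟨s, hEDv⟩ ⟨t, by rw [hHGv, hBA]⟩,
    coll_aux u ⟨1 - t, hCBv⟩ ⟨1 - s, hFEv⟩,
    coll_aux u ⟨1 - s, hFEv⟩ ⟨1 - t, by rw [hIHv, hCBv]⟩, ?_⟩
  -- perpendicularity of u and v via coinciding perpendicular bisectors
  obtain ⟨O₁, r₁, hO₁⟩ := hc1.1
  obtain ⟨O₂, r₂, hO₂⟩ := hc2.1
  have dA : dist A O₁ = r₁ := hO₁ A (by simp)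
  have dB : dist B O₁ = r₁ := hO₁ B (by simp)
  have dD : dist D O₁ = r₁ := hO₁ D (by simp)
  have dE : dist E O₁ = r₁ := hO₁ E (by simp)
  have dD2 : dist D O₂ = r₂ := hO₂ D (by simp)
  have dE2 : dist E O₂ = r₂ := hO₂ E (by simp)
  have dG2 : dist G O₂ = r₂ := hO₂ G (by simp)
  have dH2 : dist H O₂ = r₂ := hO₂ H (by simp)
  set M₁ := midpoint ℝ A B with hM₁
  set M₂ := midpoint ℝ D E with hM₂
  set M₃ := midpoint ℝ G H with hM₃
  have i1 : (inner ℝ (O₁ -ᵥ M₁) (B -ᵥ A) : ℝ) = 0 :=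
    inner_vsub_vsub_of_dist_eq_of_dist_eq
      (dist_left_midpoint_eq_dist_right_midpoint A B) (dA.trans dB.symm)
  have i2 : (inner ℝ (O₁ -ᵥ M₂) (E -ᵥ D) : ℝ) = 0 :=
    inner_vsub_vsub_of_dist_eq_of_dist_eq
      (dist_left_midpoint_eq_dist_right_midpoint D E) (dD.trans dE.symm)
  have i3 : (inner ℝ (O₂ -ᵥ M₂) (E -ᵥ D) : ℝ) = 0 :=
    inner_vsub_vsub_of_dist_eq_of_dist_eq
      (dist_left_midpoint_eq_dist_right_midpoint D E) (dD2.trans dE2.symm)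
  have i4 : (inner ℝ (O₂ -ᵥ M₃) (H -ᵥ G) : ℝ) = 0 :=
    inner_vsub_vsub_of_dist_eq_of_dist_eq
      (dist_left_midpoint_eq_dist_right_midpoint G H) (dG2.trans dH2.symm)
  -- convert to inner products with u
  have j1 : (inner ℝ (O₁ -ᵥ M₁) (u) : ℝ) = 0 := by
    have := i1; rw [hBA, real_inner_smul_right] at this
    exact (mul_eq_zero.mp this).resolve_left ht0
  have j2 : (inner ℝ (O₁ -ᵥ M₂) (u) : ℝ) = 0 := by
    have := i2; rw [hEDv, real_inner_smul_right] at this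
    exact (mul_eq_zero.mp this).resolve_left hs0
  have j3 : (inner ℝ (O₂ -ᵥ M₂) (u) : ℝ) = 0 := by
    have := i3; rw [hEDv, real_inner_smul_right] at this
    exact (mul_eq_zero.mp this).resolve_left hs0
  have j4 : (inner ℝ (O₂ -ᵥ M₃) (u) : ℝ) = 0 := by
    have := i4; rw [hHGv, hBA, real_inner_smul_right] at this
    exact (mul_eq_zero.mp this).resolve_left ht0
  -- v is the difference of the midpoints M₃ and M₁
  have hM3M1 : M₃ -ᵥ M₁ = v := by
    rw [hM₃, hM₁, hG, hH, ← midpoint_vadd_midpoint, midpoint_self, vadd_vsub]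
  have hvdecomp : v = ((O₁ -ᵥ M₁) - (O₁ -ᵥ M₂)) + ((O₂ -ᵥ M₂) - (O₂ -ᵥ M₃)) := by
    rw [vsub_sub_vsub_cancel_left, vsub_sub_vsub_cancel_left, add_comm,
      vsub_add_vsub_cancel, hM3M1]
  have hvu : (inner ℝ (v) (u) : ℝ) = 0 := by
    rw [hvdecomp, inner_add_left, inner_sub_left, inner_sub_left, j1, j2, j3, j4]
    ring
  -- conclude
  have hACv : A -ᵥ C = -u := by
    rw [hC, vsub_vadd_eq_vsub_sub, vsub_self, zero_sub]
  have hAGv : A -ᵥ G = -v := by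
    rw [hG, vsub_vadd_eq_vsub_sub, vsub_self, zero_sub]
  rw [hACv, hAGv, inner_neg_neg, real_inner_comm]
  exact hvu
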